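/- Let η : I → ℝ^d be C² with η(t) ≠ 0 and η̇(t) ≠ 0 on I, satisfying μ η̈ = −c(|η|) η + F(t) for a scalar function c and a bounded force |F(t)| ≤ C. Define e(t) = √(|η|²|η̇|² − ⟨η,η̇⟩²) and assume e(t) > 0 on I. Then |ė(t)| ≤ (1/μ)|η(t)|·|F(t)| ≤ (C/μ)|η(t)| for all t ∈ I. -/

import Mathlib

/-- Bound on the derivative of `e(t) = √(|η|²|η̇|² − ⟨η,η̇⟩²)` along a motion
`μ η̈ = −c(|η|) η + F(t)` with bounded force `|F| ≤ C`: on the open interval,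
`|ė(t)| ≤ (1/μ)|η(t)||F(t)| ≤ (C/μ)|η(t)|`. -/
theorem stmt_15 {d : ℕ} (μ C t₁ t₂ : ℝ) (hμ : 0 < μ) (hC : 0 ≤ C)
    (c : ℝ → ℝ) (η v a F : ℝ → EuclideanSpace ℝ (Fin d))
    (hne : ∀ t ∈ Set.Ioo t₁ t₂, η t ≠ 0)
    (hvne : ∀ t ∈ Set.Ioo t₁ t₂, v t ≠ 0)
    (hη : ∀ t ∈ Set.Ioo t₁ t₂, HasDerivAt η (v t) t)
    (hv : ∀ t ∈ Set.Ioo t₁ t₂, HasDerivAt v (a t) t)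
    (heq : ∀ t ∈ Set.Ioo t₁ t₂, μ • a t = -(c ‖η t‖) • η t + F t)
    (hF : ∀ t ∈ Set.Ioo t₁ t₂, ‖F t‖ ≤ C)
    (hepos : ∀ t ∈ Set.Ioo t₁ t₂,
      0 < Real.sqrt (‖η t‖ ^ 2 * ‖v t‖ ^ 2 - (inner ℝ (η t) (v t) : ℝ) ^ 2)) :
    ∀ t ∈ Set.Ioo t₁ t₂,
      |deriv (fun s =>
          Real.sqrt (‖η s‖ ^ 2 * ‖v s‖ ^ 2 - (inner ℝ (η s) (v s) : ℝ) ^ 2)) t|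
        ≤ (1 / μ) * ‖η t‖ * ‖F t‖ ∧
      (1 / μ) * ‖η t‖ * ‖F t‖ ≤ (C / μ) * ‖η t‖ := by
  intro t ht
  have hFt := hF t ht
  have hηt := hη t ht
  have hvt := hv t ht
  have he := hepos t ht
  set gt : ℝ := ‖η t‖ ^ 2 * ‖v t‖ ^ 2 - (inner ℝ (η t) (v t) : ℝ) ^ 2 with hgt_def
  have hgpos : 0 < gt := by
    by_contra h
    push_neg at h
    rw [Real.sqrt_eq_zero'.mpr (by linarith)] at he
    exact lt_irrefl 0 he
  set w : EuclideanSpace ℝ (Fin d) := (‖η t‖ ^ 2) • v t - (inner ℝ (η t) (v t) : ℝ) • η t with hw_def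
  -- derivative of the inner-product expression
  have hgfun : HasDerivAt
      (fun s => (inner ℝ (η s) (η s) : ℝ) * (inner ℝ (v s) (v s) : ℝ) - (inner ℝ (η s) (v s) : ℝ) ^ 2)
      (2 * (inner ℝ w (a t) : ℝ)) t := by
    have h1 := (hηt.inner ℝ hηt).mul (hvt.inner ℝ hvt)
    have h2 := (hηt.inner ℝ hvt).pow 2
    have h := h1.sub h2
    refine h.congr_deriv ?_
    simp only [hw_def, inner_sub_left, real_inner_smul_left, real_inner_self_eq_norm_sq]
    rw [real_inner_comm (v t) (η t), real_inner_comm (a t) (η t), real_inner_comm (a t) (v t)]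
    ring
  have hgfun' : HasDerivAt
      (fun s => ‖η s‖ ^ 2 * ‖v s‖ ^ 2 - (inner ℝ (η s) (v s) : ℝ) ^ 2)
      (2 * (inner ℝ w (a t) : ℝ)) t := by
    simpa only [real_inner_self_eq_norm_sq] using hgfun
  have hsq := hgfun'.sqrt (ne_of_gt hgpos)
  have hderiv : deriv (fun s =>
      Real.sqrt (‖η s‖ ^ 2 * ‖v s‖ ^ 2 - (inner ℝ (η s) (v s) : ℝ) ^ 2)) t
      = (inner ℝ w (a t) : ℝ) / Real.sqrt gt := by
    rw [hsq.deriv, mul_div_mul_left _ _ (two_ne_zero)]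
  -- orthogonality
  have horth : (inner ℝ w (η t) : ℝ) = 0 := by
    simp only [hw_def, inner_sub_left, real_inner_smul_left, real_inner_self_eq_norm_sq]
    rw [real_inner_comm (v t) (η t)]
    ring
  -- force relation
  have hforce : μ * (inner ℝ w (a t) : ℝ) = (inner ℝ w (F t) : ℝ) := by
    have h := heq t ht
    calc μ * (inner ℝ w (a t) : ℝ) = (inner ℝ w (μ • a t) : ℝ) := by
          rw [real_inner_smul_right]
      _ = (inner ℝ w (-(c ‖η t‖) • η t + F t) : ℝ) := by rw [h]
      _ = (inner ℝ w (F t) : ℝ) := by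
          rw [inner_add_right, real_inner_smul_right, horth]; ring
  -- norm of w
  have hw2 : ‖w‖ ^ 2 = ‖η t‖ ^ 2 * gt := by
    rw [← real_inner_self_eq_norm_sq]
    simp only [hw_def, inner_sub_left, inner_sub_right, real_inner_smul_left,
      real_inner_smul_right, hgt_def]
    simp only [real_inner_self_eq_norm_sq]
    rw [real_inner_comm (v t) (η t)]
    ring
  have hwnorm : ‖w‖ = ‖η t‖ * Real.sqrt gt := by
    have h1 : ‖w‖ = Real.sqrt (‖η t‖ ^ 2 * gt) := by
      rw [← hw2, Real.sqrt_sq (norm_nonneg _)]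
    rw [h1, Real.sqrt_mul (sq_nonneg _), Real.sqrt_sq (norm_nonneg _)]
  have hsqrtpos : 0 < Real.sqrt gt := Real.sqrt_pos.mpr hgpos
  constructor
  · rw [hderiv]
    have hwa : (inner ℝ w (a t) : ℝ) = (inner ℝ w (F t) : ℝ) / μ := by
      field_simp at hforce ⊢; linarith
    rw [hwa, abs_div, abs_div, abs_of_pos hμ, abs_of_pos hsqrtpos]
    rw [div_div]
    rw [div_le_iff₀ (by positivity)]
    have hbd : |(inner ℝ w (F t) : ℝ)| ≤ ‖w‖ * ‖F t‖ := abs_real_inner_le_norm _ _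
    calc |(inner ℝ w (F t) : ℝ)| ≤ ‖w‖ * ‖F t‖ := hbd
      _ = 1 / μ * ‖η t‖ * ‖F t‖ * (μ * Real.sqrt gt) := by
          rw [hwnorm]; field_simp
  · have h : ‖η t‖ * ‖F t‖ ≤ C * ‖η t‖ := by nlinarith [norm_nonneg (η t)]
    calc (1/μ) * ‖η t‖ * ‖F t‖ = ‖η t‖ * ‖F t‖ / μ := by ring
      _ ≤ C * ‖η t‖ / μ := by gcongr
      _ = C / μ * ‖η t‖ := by ring
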